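/- Let T ⊆ F, s : T → Z_{≥0}, N = Σ_{a∈T} s(a), D = ⌊(N+e)/2⌋ + 1, and h : T → F[z] a received word with deg h_a < s(a). Suppose Q(x,y) = B_0(x) + y·B_1(x) is a nonzero polynomial with deg(B_0) < D, deg(B_1) < D−e, satisfying Q(a+z, h_a) ≡ 0 mod z^{s(a)} for all a ∈ T. If R ∈ F[x] has degree at most e and Δ_mult^(s)(h, Enc^(s)(R)) < (1/2)(N − e), then Q(x, R(x)) is identically zero, i.e., B_0 + B_1·R = 0. -/

import Mathlib

open Polynomial Classical

/-- `agr sa p` is the order of agreement capped at `sa`: the minimum of `sa` and the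
multiplicity of `0` as a root of `p` (equal to `sa` when `p = 0`). -/
noncomputable def agr {F : Type*} [CommRing F] (sa : ℕ) (p : Polynomial F) : ℕ :=
  if p = 0 then sa else min sa (p.rootMultiplicity 0)

/-- The pointwise multiplicity distance `s(a) − min(u_a, s(a))` where `u_a` is the order of
agreement (the largest `u` with `z^u ∣ p`). -/
noncomputable def mdist {F : Type*} [CommRing F] (sa : ℕ) (p : Polynomial F) : ℕ :=
  sa - agr sa p

/-- Any polynomial `R` of degree at most `e` whose encoding is within multiplicity distance
`(N - e)/2` of the received word `h` satisfies `B₀ + B₁·R = 0` for any nonzero interpolation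
solution `Q(x,y) = B₀(x) + y·B₁(x)`. -/
theorem close_polynomial_is_root {F : Type*} [Field F]
    (T : Finset F) (s : F → ℕ) (e N D : ℕ)
    (hN : N = ∑ a ∈ T, s a) (hD : D = (N + e) / 2 + 1)
    (h : F → Polynomial F)
    (hdeg : ∀ a ∈ T, (h a).degree < (s a : WithBot ℕ))
    (B0 B1 : Polynomial F) (hQne : ¬ (B0 = 0 ∧ B1 = 0))
    (hB0 : B0.degree < (D : WithBot ℕ)) (hB1 : B1.degree < ((D - e : ℕ) : WithBot ℕ))
    (hvanish : ∀ a ∈ T, (X : Polynomial F) ^ (s a) ∣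
      (B0.comp (X + C a) + h a * B1.comp (X + C a)))
    (R : Polynomial F) (hR : R.natDegree ≤ e)
    (hclose : ((∑ a ∈ T, mdist (s a) (h a - R.comp (X + C a)) : ℕ) : ℚ) <
      ((N : ℚ) - (e : ℚ)) / 2) :
    B0 + B1 * R = 0 := by
  by_contra hP
  set P : Polynomial F := B0 + B1 * R with hPdef
  -- degree bound on P
  have hD1 : 1 ≤ D := by omega
  have hB0nd : B0.natDegree ≤ D - 1 := by
    rcases eq_or_ne B0 0 with h0 | h0
    · simp [h0]
    · have := (natDegree_lt_iff_degree_lt h0).2 hB0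
      omega
  have hPnd : P.natDegree ≤ D - 1 := by
    rcases eq_or_ne B1 0 with h1 | h1
    · simpa [hPdef, h1] using hB0nd
    · have hDe : 1 ≤ D - e := by
        by_contra hc
        have h0 : D - e = 0 := by omega
        rw [h0] at hB1
        have hbot : B1.degree = ⊥ := by
          have : B1.degree < (0 : WithBot ℕ) := by simpa using hB1
          exact Nat.WithBot.lt_zero_iff.mp this
        exact h1 (degree_eq_bot.mp hbot)
      have hB1nd : B1.natDegree ≤ D - e - 1 := by
        have := (natDegree_lt_iff_degree_lt h1).2 hB1
        omega
      have hmul : (B1 * R).natDegree ≤ D - 1 := by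
        calc (B1 * R).natDegree ≤ B1.natDegree + R.natDegree := natDegree_mul_le
          _ ≤ (D - e - 1) + e := by omega
          _ ≤ D - 1 := by omega
      calc P.natDegree ≤ max B0.natDegree (B1 * R).natDegree := natDegree_add_le _ _
        _ ≤ D - 1 := by omega
  -- each a in T is a root of P with multiplicity ≥ agr (s a) (h a - R.comp (X + C a))
  have key : ∀ a ∈ T, agr (s a) (h a - R.comp (X + C a)) ≤ P.rootMultiplicity a := by
    intro a ha
    set p := h a - R.comp (X + C a) with hp
    have hdvd1 : (X : Polynomial F) ^ agr (s a) p ∣ p := by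
      rcases eq_or_ne p 0 with h0 | h0
      · simp [h0]
      · have : agr (s a) p ≤ p.rootMultiplicity 0 := by
          simp [agr, h0]
        calc (X : Polynomial F) ^ agr (s a) p ∣ X ^ p.rootMultiplicity 0 :=
              pow_dvd_pow _ this
          _ ∣ p := by simpa using pow_rootMultiplicity_dvd p 0
    have hagr_le : agr (s a) p ≤ s a := by
      rcases eq_or_ne p 0 with h0 | h0 <;> simp [agr, h0]
    have hdvd2 : (X : Polynomial F) ^ agr (s a) p ∣ P.comp (X + C a) := by
      have hcomp : P.comp (X + C a) =
          (B0.comp (X + C a) + h a * B1.comp (X + C a)) - p * B1.comp (X + C a) := by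
        simp only [hPdef, add_comp, mul_comp, hp]
        ring
      rw [hcomp]
      exact dvd_sub
        (dvd_trans (pow_dvd_pow _ hagr_le) (hvanish a ha))
        (Dvd.dvd.mul_right hdvd1 _)
    -- transfer via composition with X - C a
    have hdvd3 : ((X : Polynomial F) - C a) ^ agr (s a) p ∣ P := by
      obtain ⟨q, hq⟩ := hdvd2
      have hPc : (P.comp (X + C a)).comp (X - C a) = P := by
        rw [comp_assoc]
        simp
      have := congrArg (fun r => r.comp (X - C a)) hq
      simp only [mul_comp, pow_comp, X_comp] at this
      rw [hPc] at this
      exact ⟨q.comp (X - C a), by rw [this]⟩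
    exact (le_rootMultiplicity_iff hP).2 hdvd3
  -- sum of multiplicities ≤ natDegree
  have hsum_le : ∑ a ∈ T, P.rootMultiplicity a ≤ P.natDegree := by
    classical
    have h1 : ∑ a ∈ T, P.rootMultiplicity a = ∑ a ∈ T, P.roots.count a := by
      refine Finset.sum_congr rfl fun a _ => ?_
      rw [count_roots]
    rw [h1]
    have h2 : ∑ a ∈ T, P.roots.count a ≤ ∑ a ∈ T ∪ P.roots.toFinset, P.roots.count a :=
      Finset.sum_le_sum_of_subset Finset.subset_union_left
    have h3 : ∑ a ∈ T ∪ P.roots.toFinset, P.roots.count a =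
        ∑ a ∈ P.roots.toFinset, P.roots.count a := by
      refine (Finset.sum_subset Finset.subset_union_right fun a _ ha => ?_).symm
      rw [Multiset.count_eq_zero]
      intro hmem
      exact ha (Multiset.mem_toFinset.mpr hmem)
    calc ∑ a ∈ T, P.roots.count a ≤ ∑ a ∈ P.roots.toFinset, P.roots.count a := by
          rw [← h3]; exact h2
      _ = Multiset.card P.roots := Multiset.toFinset_sum_count_eq _
      _ ≤ P.natDegree := P.card_roots'
  -- the counting contradiction
  have hmd_le : ∀ a ∈ T, mdist (s a) (h a - R.comp (X + C a)) ≤ s a := by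
    intro a _
    simp [mdist]
  have hsum_agr : ∑ a ∈ T, agr (s a) (h a - R.comp (X + C a)) =
      N - ∑ a ∈ T, mdist (s a) (h a - R.comp (X + C a)) := by
    have : ∀ a ∈ T, agr (s a) (h a - R.comp (X + C a)) =
        s a - mdist (s a) (h a - R.comp (X + C a)) := by
      intro a _
      have hle : agr (s a) (h a - R.comp (X + C a)) ≤ s a := by
        rcases eq_or_ne (h a - R.comp (X + C a)) 0 with h0 | h0 <;> simp [agr, h0]
      simp [mdist]
      omega
    rw [Finset.sum_congr rfl this, hN]
    rw [eq_comm, Nat.sub_eq_iff_eq_add (Finset.sum_le_sum hmd_le)]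
    rw [← Finset.sum_add_distrib]
    refine Finset.sum_congr rfl fun a ha => ?_
    have := hmd_le a ha
    omega
  set S := ∑ a ∈ T, mdist (s a) (h a - R.comp (X + C a)) with hS
  have hSN : 2 * S + e < N := by
    have : (2 * S + e : ℚ) < N := by
      push_cast at hclose ⊢
      linarith
    exact_mod_cast this
  have hbig : N - S ≤ P.natDegree := by
    calc N - S = ∑ a ∈ T, agr (s a) (h a - R.comp (X + C a)) := hsum_agr.symm
      _ ≤ ∑ a ∈ T, P.rootMultiplicity a := Finset.sum_le_sum key
      _ ≤ P.natDegree := hsum_le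
  omega
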